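/- Let m, n ≥ 1. If M is an existentially closed K_{m,n}-free incidence structure, then every m pairwise distinct points of M are simultaneously incident to exactly n−1 lines of M, and every n pairwise distinct lines of M are simultaneously incident to exactly m−1 points of M. -/

import Mathlib

open FirstOrder FirstOrder.Language

universe u v

/-- Relation symbols of the language of incidence structures: two unary symbols
(`pt` for "point", `lin` for "line") and one binary symbol (`inc` for "incidence"). -/
inductive IncRel : ℕ → Type
  | pt : IncRel 1
  | lin : IncRel 1
  | inc : IncRel 2

/-- The first-order language `{P, L, I}` of incidence structures. -/
def IncLang : FirstOrder.Language := ⟨fun _ => Empty, IncRel⟩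

section
variable {M : Type u} [IncLang.Structure M]

/-- `x` is a point. -/
def ptL (x : M) : Prop := Structure.RelMap (L := IncLang) IncRel.pt ![x]

/-- `x` is a line. -/
def lnL (x : M) : Prop := Structure.RelMap (L := IncLang) IncRel.lin ![x]

/-- `x` is incident to `y`. -/
def incL (x y : M) : Prop := Structure.RelMap (L := IncLang) IncRel.inc ![x, y]

end

/-- `M` is an incidence structure: points and lines partition the domain, and
incidence only holds between a point and a line. -/
def IsIncidenceL (M : Type u) [IncLang.Structure M] : Prop :=
  (∀ x : M, ptL x ∨ lnL x) ∧ (∀ x : M, ¬(ptL x ∧ lnL x)) ∧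
    ∀ x y : M, incL x y → ptL x ∧ lnL y

/-- `M` is `K_{m,n}`-free: there are no `m` pairwise distinct points and `n` pairwise
distinct lines with every one of the points incident to every one of the lines. -/
def KFreeL (m n : ℕ) (M : Type u) [IncLang.Structure M] : Prop :=
  ¬∃ (a : Fin m → M) (b : Fin n → M),
      Function.Injective a ∧ Function.Injective b ∧
      (∀ i, ptL (a i)) ∧ (∀ j, lnL (b j)) ∧ ∀ i j, incL (a i) (b j)

/-- `M` is an existentially closed `K_{m,n}`-free incidence structure: `M` is a
`K_{m,n}`-free incidence structure, and for every `K_{m,n}`-free incidence structure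
`N` containing `M` as an induced substructure (i.e. admitting an embedding of `M`),
every existential formula `∃ ȳ φ(ā, ȳ)` (with `φ` quantifier-free and parameters `ā`
from `M`) that holds in `N` also holds in `M`. -/
def IsECL (m n : ℕ) (M : Type u) [IncLang.Structure M] : Prop :=
  IsIncidenceL M ∧ KFreeL m n M ∧
    ∀ (N : Type u) [IncLang.Structure N], IsIncidenceL N → KFreeL m n N →
      ∀ (f : M ↪[IncLang] N) (k : ℕ) (φ : IncLang.BoundedFormula M k), φ.IsQF →
        (∃ xs : Fin k → N, φ.Realize (f : M → N) xs) →
          ∃ xs : Fin k → M, φ.Realize (id : M → M) xs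

-- helpers
lemma vec1_eq {α : Type*} (v : Fin 1 → α) : v = ![v 0] := by
  funext i; fin_cases i <;> rfl

lemma vec2_eq {α : Type*} (v : Fin 2 → α) : v = ![v 0, v 1] := by
  funext i; fin_cases i <;> rfl

lemma isQF_foldr {L : FirstOrder.Language} {α : Type*} {n : ℕ}
    (l : List (L.BoundedFormula α n)) (h : ∀ φ ∈ l, φ.IsQF) :
    (l.foldr (· ⊓ ·) ⊤).IsQF := by
  induction l with
  | nil =>
    exact (BoundedFormula.isQF_bot.imp BoundedFormula.isQF_bot)
  | cons a l ih =>
    have ha := h a List.mem_cons_self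
    have hl := ih (fun φ hφ => h φ (List.mem_cons_of_mem _ hφ))
    exact ((ha.imp (hl.imp BoundedFormula.isQF_bot)).imp BoundedFormula.isQF_bot)

lemma isQF_iInf {L : FirstOrder.Language} {α β : Type*} {n : ℕ} [Finite β]
    (f : β → L.BoundedFormula α n) (h : ∀ b, (f b).IsQF) :
    (BoundedFormula.iInf f).IsQF := by
  unfold BoundedFormula.iInf
  apply isQF_foldr
  intro φ hφ
  simp only [List.mem_map] at hφ
  obtain ⟨b, _, rfl⟩ := hφ
  exact h b

section Ext
variable {M : Type u} [IncLang.Structure M]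

/-- Extension of `M` by `k` new lines, each incident exactly to the points in the range of `a`. -/
def extRelL (a : Fin m' → M) (k : ℕ) : ∀ {l : ℕ}, IncRel l → (Fin l → M ⊕ Fin k) → Prop
  | _, IncRel.pt, v =>
      match v 0 with
      | Sum.inl x => ptL x
      | Sum.inr _ => False
  | _, IncRel.lin, v =>
      match v 0 with
      | Sum.inl x => lnL x
      | Sum.inr _ => True
  | _, IncRel.inc, v =>
      match v 0, v 1 with
      | Sum.inl x, Sum.inl y => incL x y
      | Sum.inl x, Sum.inr _ => ∃ i, x = a i
      | Sum.inr _, _ => False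

def extStructL (a : Fin m' → M) (k : ℕ) : IncLang.Structure (M ⊕ Fin k) where
  funMap := fun f _ => nomatch f
  RelMap := extRelL a k

end Ext

section ExtL
variable {M : Type u} [IncLang.Structure M] {m' k : ℕ} (a : Fin m' → M)

lemma extL_pt_inl (x : M) : @ptL _ (extStructL a k) (Sum.inl x) ↔ ptL x := Iff.rfl
lemma extL_pt_inr (c : Fin k) : ¬ @ptL _ (extStructL a k) (Sum.inr c) := fun h => h
lemma extL_ln_inl (x : M) : @lnL _ (extStructL a k) (Sum.inl x) ↔ lnL x := Iff.rfl
lemma extL_ln_inr (c : Fin k) : @lnL _ (extStructL a k) (Sum.inr c) := trivial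
lemma extL_inc_inl_inl (x y : M) :
    @incL _ (extStructL a k) (Sum.inl x) (Sum.inl y) ↔ incL x y := Iff.rfl
lemma extL_inc_inl_inr (x : M) (c : Fin k) :
    @incL _ (extStructL a k) (Sum.inl x) (Sum.inr c) ↔ ∃ i, x = a i := Iff.rfl
lemma extL_inc_inr (c : Fin k) (z : M ⊕ Fin k) :
    ¬ @incL _ (extStructL a k) (Sum.inr c) z := fun h => h

end ExtL

section ExtL2
variable {M : Type u} [IncLang.Structure M] {m' k : ℕ} (a : Fin m' → M)

def extEmbL : @Embedding IncLang M (M ⊕ Fin k) _ (extStructL a k) :=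
  letI := extStructL a k
  { toFun := Sum.inl
    inj' := Sum.inl_injective
    map_fun' := fun f _ => nomatch f
    map_rel' := by
      intro l r v
      cases r with
      | pt => rw [vec1_eq v]; exact Iff.rfl
      | lin => rw [vec1_eq v]; exact Iff.rfl
      | inc => rw [vec2_eq v]; exact Iff.rfl }

lemma extL_isIncidence (hM : IsIncidenceL M) (hpa : ∀ i, ptL (a i)) :
    @IsIncidenceL (M ⊕ Fin k) (extStructL a k) := by
  letI := extStructL a k
  refine ⟨?_, ?_, ?_⟩
  · rintro (x | c)
    · exact hM.1 x
    · exact Or.inr (extL_ln_inr a c)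
  · rintro (x | c) ⟨hp, hl⟩
    · exact hM.2.1 x ⟨hp, hl⟩
    · exact extL_pt_inr a c hp
  · rintro (x | c) (y | d) h
    · exact ⟨(hM.2.2 x y h).1, (hM.2.2 x y h).2⟩
    · obtain ⟨i, rfl⟩ := (extL_inc_inl_inr a x d).mp h
      exact ⟨(extL_pt_inl a _).mpr (hpa i), extL_ln_inr a d⟩
    · exact absurd h (extL_inc_inr a c _)
    · exact absurd h (extL_inc_inr a c _)

end ExtL2

section ExtL3
variable {M : Type u} [IncLang.Structure M] {m n k : ℕ} {a : Fin m → M}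

lemma extL_kfree (ha : Function.Injective a) (hfree : KFreeL m n M)
    (F : Finset M) (hF : ∀ y, lnL y → (∀ i, incL (a i) y) → y ∈ F)
    (hcard : F.card + k < n) :
    @KFreeL m n (M ⊕ Fin k) (extStructL a k) := by
  classical
  letI := extStructL a k
  rintro ⟨a', b', ha', hb', hpa', hlb', hinc'⟩
  -- every a' i is of the form inl x
  have hx : ∀ i, ∃ x : M, a' i = Sum.inl x := by
    intro i
    cases h : a' i with
    | inl x => exact ⟨x, rfl⟩
    | inr c => exact absurd (h ▸ hpa' i) (extL_pt_inr a c)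
  choose x hxeq using hx
  have hxinj : Function.Injective x := by
    intro i i' h
    exact ha' (by rw [hxeq, hxeq, h])
  have hxpt : ∀ i, ptL (x i) := fun i => (extL_pt_inl a (x i)).mp (hxeq i ▸ hpa' i)
  by_cases hB : ∃ j c, b' j = Sum.inr c
  · -- some new line is used; then {x i} = {a i} and all lines are common lines
    obtain ⟨j0, c0, hj0⟩ := hB
    have hxr : ∀ i, ∃ i', x i = a i' := by
      intro i
      have := hinc' i j0
      rw [hxeq i, hj0] at this
      exact (extL_inc_inl_inr a (x i) c0).mp this
    -- range x = range a as finsets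
    have himg : (Finset.univ.image x) = (Finset.univ.image a) := by
      apply Finset.eq_of_subset_of_card_le
      · intro z hz
        simp only [Finset.mem_image, Finset.mem_univ, true_and] at hz ⊢
        obtain ⟨i, rfl⟩ := hz
        obtain ⟨i', hi'⟩ := hxr i
        exact ⟨i', hi'.symm⟩
      · rw [Finset.card_image_of_injective _ ha, Finset.card_image_of_injective _ hxinj]
    have hsurj : ∀ i', ∃ i, x i = a i' := by
      intro i'
      have : a i' ∈ Finset.univ.image x := by
        rw [himg]; exact Finset.mem_image_of_mem a (Finset.mem_univ i')
      simpa using this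
    -- all lines b' j lie in a small finset
    set T : Finset (M ⊕ Fin k) := F.image Sum.inl ∪ Finset.univ.image Sum.inr with hT
    have hmem : ∀ j, b' j ∈ T := by
      intro j
      cases h : b' j with
      | inl y =>
        have hy : lnL y := (extL_ln_inl a y).mp (h ▸ hlb' j)
        have hyc : ∀ i', incL (a i') y := by
          intro i'
          obtain ⟨i, hi⟩ := hsurj i'
          have := hinc' i j
          rw [hxeq i, h, hi] at this
          exact (extL_inc_inl_inl a _ y).mp this
        exact Finset.mem_union_left _ (Finset.mem_image_of_mem _ (hF y hy hyc))
      | inr c => exact Finset.mem_union_right _ (Finset.mem_image_of_mem _ (Finset.mem_univ c))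
    have hle : n ≤ T.card := by
      have := Finset.card_le_card_of_injOn (s := (Finset.univ : Finset (Fin n))) b'
        (fun j _ => hmem j) (Function.Injective.injOn hb')
      simpa using this
    have hle2 : T.card ≤ F.card + k := by
      refine le_trans (Finset.card_union_le _ _) ?_
      rw [Finset.card_image_of_injective _ Sum.inl_injective,
        Finset.card_image_of_injective _ Sum.inr_injective]
      simp
    omega
  · -- all lines are old: contradiction with K-freeness of M
    push_neg at hB
    have hy : ∀ j, ∃ y : M, b' j = Sum.inl y := by
      intro j
      cases h : b' j with
      | inl y => exact ⟨y, rfl⟩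
      | inr c => exact absurd h (hB j c)
    choose y hyeq using hy
    refine hfree ⟨x, y, hxinj, ?_, hxpt, ?_, ?_⟩
    · intro j j' h
      exact hb' (by rw [hyeq, hyeq, h])
    · exact fun j => (extL_ln_inl a (y j)).mp (hyeq j ▸ hlb' j)
    · intro i j
      have := hinc' i j
      rw [hxeq i, hyeq j] at this
      exact (extL_inc_inl_inl a _ _).mp this

end ExtL3

section Formula
variable {M : Type u} {m q : ℕ}

/-- The QF formula in `q` free variables saying: the variables are pairwise distinct lines,
each incident to all the parameters `a i`. -/
noncomputable def commonF (a : Fin m → M) (q : ℕ) : IncLang.BoundedFormula M q :=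
  (BoundedFormula.iInf (fun p : Fin q × Fin q =>
      if p.1 = p.2 then ⊤ else ((Term.var (Sum.inr p.1)).bdEqual (Term.var (Sum.inr p.2))).not)) ⊓
  ((BoundedFormula.iInf (fun j : Fin q =>
      Relations.boundedFormula₁ (L := IncLang) IncRel.lin (Term.var (Sum.inr j)))) ⊓
   (BoundedFormula.iInf (fun p : Fin m × Fin q =>
      Relations.boundedFormula₂ (L := IncLang) IncRel.inc (Term.var (Sum.inl (a p.1))) (Term.var (Sum.inr p.2)))))

lemma isQF_top {α : Type*} {n : ℕ} : (⊤ : IncLang.BoundedFormula α n).IsQF :=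
  BoundedFormula.isQF_bot.imp BoundedFormula.isQF_bot

lemma commonF_isQF (a : Fin m → M) : (commonF a q).IsQF := by
  have hnot : ∀ {ψ : IncLang.BoundedFormula M q}, ψ.IsQF → ψ.not.IsQF :=
    fun h => h.imp BoundedFormula.isQF_bot
  have hinf : ∀ {ψ₁ ψ₂ : IncLang.BoundedFormula M q}, ψ₁.IsQF → ψ₂.IsQF → (ψ₁ ⊓ ψ₂).IsQF :=
    fun h1 h2 => (h1.imp (h2.imp BoundedFormula.isQF_bot)).imp BoundedFormula.isQF_bot
  refine hinf (isQF_iInf _ ?_) (hinf (isQF_iInf _ ?_) (isQF_iInf _ ?_))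
  · intro p
    split
    · exact isQF_top
    · exact hnot (BoundedFormula.IsAtomic.equal _ _).isQF
  · exact fun j => (BoundedFormula.IsAtomic.rel _ _).isQF
  · exact fun p => (BoundedFormula.IsAtomic.rel _ _).isQF

lemma realize_commonF {N : Type u} [IncLang.Structure N] (a : Fin m → M) (v : M → N)
    (xs : Fin q → N) :
    (commonF a q).Realize v xs ↔
      Function.Injective xs ∧ (∀ j, lnL (xs j)) ∧ ∀ i j, incL (v (a i)) (xs j) := by
  rw [commonF]
  simp only [BoundedFormula.realize_inf, BoundedFormula.realize_iInf, Finset.mem_univ,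
    forall_true_left, Prod.forall]
  constructor
  · rintro ⟨h1, h2, h3⟩
    refine ⟨?_, ?_, ?_⟩
    · intro j j' hjj'
      by_contra hne
      have := h1 j j'
      rw [if_neg hne] at this
      rw [BoundedFormula.realize_not, BoundedFormula.realize_bdEqual] at this
      exact this hjj'
    · intro j
      have := h2 j
      replace this := BoundedFormula.realize_rel₁.mp this
      exact this
    · intro i j
      have := h3 i j
      replace this := BoundedFormula.realize_rel₂.mp this
      exact this
  · rintro ⟨h1, h2, h3⟩
    refine ⟨?_, ?_, ?_⟩
    · intro j j'
      by_cases h : j = j'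
      · rw [if_pos h]; exact BoundedFormula.realize_top.mpr trivial
      · rw [if_neg h]
        rw [BoundedFormula.realize_not, BoundedFormula.realize_bdEqual]
        exact fun hc => h (h1 hc)
    · intro j
      refine BoundedFormula.realize_rel₁.mpr ?_
      exact h2 j
    · intro i j
      refine BoundedFormula.realize_rel₂.mpr ?_
      exact h3 i j

end Formula

section Main1
variable {M : Type u} [IncLang.Structure M]

lemma main1 {m n : ℕ} (hm : 1 ≤ m) (hn : 1 ≤ n) (hM : IsECL m n M)
    (a : Fin m → M) (ha : Function.Injective a) (hpa : ∀ i, ptL (a i)) :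
    ∃ b : Fin (n - 1) → M, Function.Injective b ∧ (∀ j, lnL (b j)) ∧
      (∀ i j, incL (a i) (b j)) ∧
      ∀ y : M, lnL y → (∀ i, incL (a i) y) → ∃ j, y = b j := by
  classical
  set S : Set M := {y : M | lnL y ∧ ∀ i, incL (a i) y} with hS
  -- no n distinct common lines
  have key : ∀ t : Finset M, ↑t ⊆ S → t.card ≠ n := by
    intro t hts hcard
    have e : Fin n ≃ t := (Fin.castOrderIso hcard.symm).toEquiv.trans t.equivFin.symm
    refine hM.2.1 ⟨a, fun j => (e j : M), ha, ?_, hpa, ?_, ?_⟩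
    · intro j j' h
      exact e.injective (Subtype.val_injective h)
    · intro j
      exact (hts (e j).2).1
    · intro i j
      exact (hts (e j).2).2 i
  have key2 : ∀ t : Finset M, ↑t ⊆ S → t.card < n := by
    intro t hts
    by_contra hlt
    push_neg at hlt
    obtain ⟨u, hu, hucard⟩ := Finset.exists_subset_card_eq hlt
    exact key u (subset_trans (Finset.coe_subset.mpr hu) hts) hucard
  have hSfin : S.Finite := by
    by_contra hinf
    obtain ⟨t, hts, htcard⟩ := (Set.not_infinite.not_right.mpr hinf).exists_subset_card_eq n
    exact key t hts htcard
  set F : Finset M := hSfin.toFinset with hFdef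
  have hFS : ↑F ⊆ S := by simp [hFdef]
  have hFcard : F.card < n := key2 F hFS
  set t := F.card with htdef
  set k := n - 1 - t with hkdef
  have htk : t + k = n - 1 := by omega
  -- the extension
  letI Nstr := extStructL a k
  have hincN := extL_isIncidence (k := k) a hM.1 hpa
  have hfreeN : @KFreeL m n (M ⊕ Fin k) Nstr := by
    refine extL_kfree ha hM.2.1 F ?_ (by omega)
    intro y hy hyc
    exact hSfin.mem_toFinset.mpr ⟨hy, hyc⟩
  -- the witnesses in the extension
  let e : Fin t ≃ F := F.equivFin.symm
  let w0 : Fin t ⊕ Fin k → M ⊕ Fin k := Sum.elim (fun i => Sum.inl (e i : M)) Sum.inr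
  have hw0inj : Function.Injective w0 := by
    rintro (i | c) (i' | c') h <;> simp only [w0, Sum.elim_inl, Sum.elim_inr] at h
    · rw [Sum.inl.injEq] at h
      rw [e.injective (Subtype.val_injective h)]
    · exact absurd h (by simp)
    · exact absurd h (by simp)
    · rw [Sum.inr.injEq] at h; rw [h]
  have hw0S : ∀ z, (∀ i, @incL _ Nstr (Sum.inl (a i)) (w0 z)) ∧ @lnL _ Nstr (w0 z) := by
    rintro (i' | c)
    · have hmem : (e i' : M) ∈ S := hFS (e i').2
      exact ⟨fun i => (extL_inc_inl_inl a _ _).mpr (hmem.2 i),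
        (extL_ln_inl a _).mpr hmem.1⟩
    · exact ⟨fun i => (extL_inc_inl_inr a _ _).mpr ⟨i, rfl⟩, extL_ln_inr a c⟩
  let w : Fin (n - 1) → M ⊕ Fin k := w0 ∘ finSumFinEquiv.symm ∘ Fin.cast htk.symm
  have hwrealize : (commonF a (n - 1)).Realize ((extEmbL a : M ↪[IncLang] (M ⊕ Fin k)) : M → (M ⊕ Fin k)) w := by
    rw [realize_commonF]
    refine ⟨?_, fun j => (hw0S _).2, fun i j => (hw0S _).1 i⟩
    exact hw0inj.comp (finSumFinEquiv.symm.injective.comp (Fin.cast_injective _))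
  obtain ⟨b, hb⟩ := hM.2.2 (M ⊕ Fin k) hincN hfreeN (extEmbL a) (n - 1)
    (commonF a (n - 1)) (commonF_isQF a) ⟨w, hwrealize⟩
  rw [realize_commonF] at hb
  obtain ⟨hbinj, hbln, hbinc⟩ := hb
  refine ⟨b, hbinj, hbln, fun i j => hbinc i j, ?_⟩
  -- uniqueness
  intro y hy hyc
  by_contra hne
  push_neg at hne
  have hb'' : ∀ j : Fin n, ∃ z : M, ((↑j < n - 1 → ∃ j', z = b j') ∧ (¬↑j < n - 1 → z = y)) := by
    intro j
    by_cases h : (j : ℕ) < n - 1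
    · exact ⟨b ⟨j, h⟩, fun _ => ⟨_, rfl⟩, fun hc => absurd h hc⟩
    · exact ⟨y, fun hc => absurd hc h, fun _ => rfl⟩
  let b'' : Fin n → M := fun j => if h : (j : ℕ) < n - 1 then b ⟨j, h⟩ else y
  refine hM.2.1 ⟨a, b'', ha, ?_, hpa, ?_, ?_⟩
  · intro j j' h
    simp only [b''] at h
    split_ifs at h with h1 h2 h2
    · have := hbinj h
      rw [Fin.mk.injEq] at this
      exact Fin.ext this
    · exact absurd h.symm (hne _)
    · exact absurd h (hne _)
    · apply Fin.ext; omega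
  · intro j
    simp only [b'']
    split_ifs
    · exact hbln _
    · exact hy
  · intro i j
    simp only [b'']
    split_ifs
    · exact hbinc i _
    · exact hyc i

end Main1

section ExtP
variable {M : Type u} [IncLang.Structure M]

/-- Extension of `M` by `k` new points, each incident exactly to the lines in the range of `b`. -/
def extRelP (b : Fin n' → M) (k : ℕ) : ∀ {l : ℕ}, IncRel l → (Fin l → M ⊕ Fin k) → Prop
  | _, IncRel.pt, v =>
      match v 0 with
      | Sum.inl x => ptL x
      | Sum.inr _ => True
  | _, IncRel.lin, v =>
      match v 0 with
      | Sum.inl x => lnL x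
      | Sum.inr _ => False
  | _, IncRel.inc, v =>
      match v 0, v 1 with
      | Sum.inl x, Sum.inl y => incL x y
      | Sum.inr _, Sum.inl y => ∃ j, y = b j
      | _, Sum.inr _ => False

def extStructP (b : Fin n' → M) (k : ℕ) : IncLang.Structure (M ⊕ Fin k) where
  funMap := fun f _ => nomatch f
  RelMap := extRelP b k

variable {n' k : ℕ} (b : Fin n' → M)

lemma extP_pt_inl (x : M) : @ptL _ (extStructP b k) (Sum.inl x) ↔ ptL x := Iff.rfl
lemma extP_pt_inr (c : Fin k) : @ptL _ (extStructP b k) (Sum.inr c) := trivial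
lemma extP_ln_inl (x : M) : @lnL _ (extStructP b k) (Sum.inl x) ↔ lnL x := Iff.rfl
lemma extP_ln_inr (c : Fin k) : ¬ @lnL _ (extStructP b k) (Sum.inr c) := fun h => h
lemma extP_inc_inl_inl (x y : M) :
    @incL _ (extStructP b k) (Sum.inl x) (Sum.inl y) ↔ incL x y := Iff.rfl
lemma extP_inc_inr_inl (c : Fin k) (y : M) :
    @incL _ (extStructP b k) (Sum.inr c) (Sum.inl y) ↔ ∃ j, y = b j := Iff.rfl
lemma extP_inc_inr' (z : M ⊕ Fin k) (c : Fin k) :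
    ¬ @incL _ (extStructP b k) z (Sum.inr c) := by
  cases z with
  | inl x => exact fun h => h
  | inr c' => exact fun h => h

def extEmbP : @Embedding IncLang M (M ⊕ Fin k) _ (extStructP b k) :=
  letI := extStructP b k
  { toFun := Sum.inl
    inj' := Sum.inl_injective
    map_fun' := fun f _ => nomatch f
    map_rel' := by
      intro l r v
      cases r with
      | pt => rw [vec1_eq v]; exact Iff.rfl
      | lin => rw [vec1_eq v]; exact Iff.rfl
      | inc => rw [vec2_eq v]; exact Iff.rfl }

lemma extP_isIncidence (hM : IsIncidenceL M) (hlb : ∀ j, lnL (b j)) :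
    @IsIncidenceL (M ⊕ Fin k) (extStructP b k) := by
  letI := extStructP b k
  refine ⟨?_, ?_, ?_⟩
  · rintro (x | c)
    · exact hM.1 x
    · exact Or.inl (extP_pt_inr b c)
  · rintro (x | c) ⟨hp, hl⟩
    · exact hM.2.1 x ⟨hp, hl⟩
    · exact extP_ln_inr b c hl
  · rintro (x | c) (y | d) h
    · exact ⟨(hM.2.2 x y h).1, (hM.2.2 x y h).2⟩
    · exact absurd h (extP_inc_inr' b _ d)
    · obtain ⟨j, rfl⟩ := (extP_inc_inr_inl b c y).mp h
      exact ⟨extP_pt_inr b c, (extP_ln_inl b _).mpr (hlb j)⟩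
    · exact absurd h (extP_inc_inr' b _ d)

end ExtP

section ExtP3
variable {M : Type u} [IncLang.Structure M] {m n k : ℕ} {b : Fin n → M}

lemma extP_kfree (hb : Function.Injective b) (hfree : KFreeL m n M)
    (F : Finset M) (hF : ∀ x, ptL x → (∀ j, incL x (b j)) → x ∈ F)
    (hcard : F.card + k < m) :
    @KFreeL m n (M ⊕ Fin k) (extStructP b k) := by
  classical
  letI := extStructP b k
  rintro ⟨a', b', ha', hb', hpa', hlb', hinc'⟩
  -- every b' j is of the form inl y
  have hy : ∀ j, ∃ y : M, b' j = Sum.inl y := by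
    intro j
    cases h : b' j with
    | inl y => exact ⟨y, rfl⟩
    | inr c => exact absurd (h ▸ hlb' j) (extP_ln_inr b c)
  choose y hyeq using hy
  have hyinj : Function.Injective y := by
    intro j j' h
    exact hb' (by rw [hyeq, hyeq, h])
  have hyln : ∀ j, lnL (y j) := fun j => (extP_ln_inl b (y j)).mp (hyeq j ▸ hlb' j)
  by_cases hB : ∃ i c, a' i = Sum.inr c
  · obtain ⟨i0, c0, hi0⟩ := hB
    have hyr : ∀ j, ∃ j', y j = b j' := by
      intro j
      have := hinc' i0 j
      rw [hyeq j, hi0] at this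
      exact (extP_inc_inr_inl b c0 (y j)).mp this
    have himg : (Finset.univ.image y) = (Finset.univ.image b) := by
      apply Finset.eq_of_subset_of_card_le
      · intro z hz
        simp only [Finset.mem_image, Finset.mem_univ, true_and] at hz ⊢
        obtain ⟨j, rfl⟩ := hz
        obtain ⟨j', hj'⟩ := hyr j
        exact ⟨j', hj'.symm⟩
      · rw [Finset.card_image_of_injective _ hb, Finset.card_image_of_injective _ hyinj]
    have hsurj : ∀ j', ∃ j, y j = b j' := by
      intro j'
      have : b j' ∈ Finset.univ.image y := by
        rw [himg]; exact Finset.mem_image_of_mem b (Finset.mem_univ j')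
      simpa using this
    set T : Finset (M ⊕ Fin k) := F.image Sum.inl ∪ Finset.univ.image Sum.inr with hT
    have hmem : ∀ i, a' i ∈ T := by
      intro i
      cases h : a' i with
      | inl x =>
        have hxp : ptL x := (extP_pt_inl b x).mp (h ▸ hpa' i)
        have hxc : ∀ j', incL x (b j') := by
          intro j'
          obtain ⟨j, hj⟩ := hsurj j'
          have := hinc' i j
          rw [hyeq j, h, hj] at this
          exact (extP_inc_inl_inl b x _).mp this
        exact Finset.mem_union_left _ (Finset.mem_image_of_mem _ (hF x hxp hxc))
      | inr c => exact Finset.mem_union_right _ (Finset.mem_image_of_mem _ (Finset.mem_univ c))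
    have hle : m ≤ T.card := by
      have := Finset.card_le_card_of_injOn (s := (Finset.univ : Finset (Fin m))) a'
        (fun i _ => hmem i) (Function.Injective.injOn ha')
      simpa using this
    have hle2 : T.card ≤ F.card + k := by
      refine le_trans (Finset.card_union_le _ _) ?_
      rw [Finset.card_image_of_injective _ Sum.inl_injective,
        Finset.card_image_of_injective _ Sum.inr_injective]
      simp
    omega
  · push_neg at hB
    have hx : ∀ i, ∃ x : M, a' i = Sum.inl x := by
      intro i
      cases h : a' i with
      | inl x => exact ⟨x, rfl⟩
      | inr c => exact absurd h (hB i c)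
    choose x hxeq using hx
    refine hfree ⟨x, y, ?_, hyinj, ?_, hyln, ?_⟩
    · intro i i' h
      exact ha' (by rw [hxeq, hxeq, h])
    · exact fun i => (extP_pt_inl b (x i)).mp (hxeq i ▸ hpa' i)
    · intro i j
      have := hinc' i j
      rw [hxeq i, hyeq j] at this
      exact (extP_inc_inl_inl b _ _).mp this

end ExtP3

section FormulaP
variable {M : Type u} {n' q : ℕ}

/-- The QF formula in `q` free variables saying: the variables are pairwise distinct points,
each incident to all the parameters `b j`. -/
noncomputable def commonFP (b : Fin n' → M) (q : ℕ) : IncLang.BoundedFormula M q :=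
  (BoundedFormula.iInf (fun p : Fin q × Fin q =>
      if p.1 = p.2 then ⊤ else ((Term.var (Sum.inr p.1)).bdEqual (Term.var (Sum.inr p.2))).not)) ⊓
  ((BoundedFormula.iInf (fun i : Fin q =>
      Relations.boundedFormula₁ (L := IncLang) IncRel.pt (Term.var (Sum.inr i)))) ⊓
   (BoundedFormula.iInf (fun p : Fin q × Fin n' =>
      Relations.boundedFormula₂ (L := IncLang) IncRel.inc (Term.var (Sum.inr p.1))
        (Term.var (Sum.inl (b p.2))))))

lemma commonFP_isQF (b : Fin n' → M) : (commonFP b q).IsQF := by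
  have hnot : ∀ {ψ : IncLang.BoundedFormula M q}, ψ.IsQF → ψ.not.IsQF :=
    fun h => h.imp BoundedFormula.isQF_bot
  have hinf : ∀ {ψ₁ ψ₂ : IncLang.BoundedFormula M q}, ψ₁.IsQF → ψ₂.IsQF → (ψ₁ ⊓ ψ₂).IsQF :=
    fun h1 h2 => (h1.imp (h2.imp BoundedFormula.isQF_bot)).imp BoundedFormula.isQF_bot
  refine hinf (isQF_iInf _ ?_) (hinf (isQF_iInf _ ?_) (isQF_iInf _ ?_))
  · intro p
    split
    · exact isQF_top
    · exact hnot (BoundedFormula.IsAtomic.equal _ _).isQF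
  · exact fun j => (BoundedFormula.IsAtomic.rel _ _).isQF
  · exact fun p => (BoundedFormula.IsAtomic.rel _ _).isQF

lemma realize_commonFP {N : Type u} [IncLang.Structure N] (b : Fin n' → M) (v : M → N)
    (xs : Fin q → N) :
    (commonFP b q).Realize v xs ↔
      Function.Injective xs ∧ (∀ i, ptL (xs i)) ∧ ∀ i j, incL (xs i) (v (b j)) := by
  rw [commonFP]
  simp only [BoundedFormula.realize_inf, BoundedFormula.realize_iInf, Finset.mem_univ,
    forall_true_left, Prod.forall]
  constructor
  · rintro ⟨h1, h2, h3⟩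
    refine ⟨?_, ?_, ?_⟩
    · intro j j' hjj'
      by_contra hne
      have := h1 j j'
      rw [if_neg hne] at this
      rw [BoundedFormula.realize_not, BoundedFormula.realize_bdEqual] at this
      exact this hjj'
    · intro j
      have := h2 j
      replace this := BoundedFormula.realize_rel₁.mp this
      exact this
    · intro i j
      have := h3 i j
      replace this := BoundedFormula.realize_rel₂.mp this
      exact this
  · rintro ⟨h1, h2, h3⟩
    refine ⟨?_, ?_, ?_⟩
    · intro j j'
      by_cases h : j = j'
      · rw [if_pos h]; exact BoundedFormula.realize_top.mpr trivial
      · rw [if_neg h]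
        rw [BoundedFormula.realize_not, BoundedFormula.realize_bdEqual]
        exact fun hc => h (h1 hc)
    · intro j
      refine BoundedFormula.realize_rel₁.mpr ?_
      exact h2 j
    · intro i j
      refine BoundedFormula.realize_rel₂.mpr ?_
      exact h3 i j

end FormulaP

section Main2
variable {M : Type u} [IncLang.Structure M]

lemma main2 {m n : ℕ} (hm : 1 ≤ m) (hn : 1 ≤ n) (hM : IsECL m n M)
    (b : Fin n → M) (hb : Function.Injective b) (hlb : ∀ j, lnL (b j)) :
    ∃ a : Fin (m - 1) → M, Function.Injective a ∧ (∀ i, ptL (a i)) ∧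
      (∀ i j, incL (a i) (b j)) ∧
      ∀ x : M, ptL x → (∀ j, incL x (b j)) → ∃ i, x = a i := by
  classical
  set S : Set M := {x : M | ptL x ∧ ∀ j, incL x (b j)} with hS
  have key : ∀ t : Finset M, ↑t ⊆ S → t.card ≠ m := by
    intro t hts hcard
    have e : Fin m ≃ t := (Fin.castOrderIso hcard.symm).toEquiv.trans t.equivFin.symm
    refine hM.2.1 ⟨fun i => (e i : M), b, ?_, hb, ?_, hlb, ?_⟩
    · intro i i' h
      exact e.injective (Subtype.val_injective h)
    · intro i
      exact (hts (e i).2).1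
    · intro i j
      exact (hts (e i).2).2 j
  have key2 : ∀ t : Finset M, ↑t ⊆ S → t.card < m := by
    intro t hts
    by_contra hlt
    push_neg at hlt
    obtain ⟨u, hu, hucard⟩ := Finset.exists_subset_card_eq hlt
    exact key u (subset_trans (Finset.coe_subset.mpr hu) hts) hucard
  have hSfin : S.Finite := by
    by_contra hinf
    obtain ⟨t, hts, htcard⟩ := (Set.not_infinite.not_right.mpr hinf).exists_subset_card_eq m
    exact key t hts htcard
  set F : Finset M := hSfin.toFinset with hFdef
  have hFS : ↑F ⊆ S := by simp [hFdef]
  have hFcard : F.card < m := key2 F hFS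
  set t := F.card with htdef
  set k := m - 1 - t with hkdef
  have htk : t + k = m - 1 := by omega
  letI Nstr := extStructP b k
  have hincN := extP_isIncidence (k := k) b hM.1 hlb
  have hfreeN : @KFreeL m n (M ⊕ Fin k) Nstr := by
    refine extP_kfree hb hM.2.1 F ?_ (by omega)
    intro x hx hxc
    exact hSfin.mem_toFinset.mpr ⟨hx, hxc⟩
  let e : Fin t ≃ F := F.equivFin.symm
  let w0 : Fin t ⊕ Fin k → M ⊕ Fin k := Sum.elim (fun i => Sum.inl (e i : M)) Sum.inr
  have hw0inj : Function.Injective w0 := by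
    rintro (i | c) (i' | c') h <;> simp only [w0, Sum.elim_inl, Sum.elim_inr] at h
    · rw [Sum.inl.injEq] at h
      rw [e.injective (Subtype.val_injective h)]
    · exact absurd h (by simp)
    · exact absurd h (by simp)
    · rw [Sum.inr.injEq] at h; rw [h]
  have hw0S : ∀ z, (∀ j, @incL _ Nstr (w0 z) (Sum.inl (b j))) ∧ @ptL _ Nstr (w0 z) := by
    rintro (i' | c)
    · have hmem : (e i' : M) ∈ S := hFS (e i').2
      exact ⟨fun j => (extP_inc_inl_inl b _ _).mpr (hmem.2 j),
        (extP_pt_inl b _).mpr hmem.1⟩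
    · exact ⟨fun j => (extP_inc_inr_inl b _ _).mpr ⟨j, rfl⟩, extP_pt_inr b c⟩
  let w : Fin (m - 1) → M ⊕ Fin k := w0 ∘ finSumFinEquiv.symm ∘ Fin.cast htk.symm
  have hwrealize : (commonFP b (m - 1)).Realize
      ((extEmbP b : M ↪[IncLang] (M ⊕ Fin k)) : M → (M ⊕ Fin k)) w := by
    rw [realize_commonFP]
    refine ⟨?_, fun i => (hw0S _).2, fun i j => (hw0S _).1 j⟩
    exact hw0inj.comp (finSumFinEquiv.symm.injective.comp (Fin.cast_injective _))
  obtain ⟨aw, haw⟩ := hM.2.2 (M ⊕ Fin k) hincN hfreeN (extEmbP b) (m - 1)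
    (commonFP b (m - 1)) (commonFP_isQF b) ⟨w, hwrealize⟩
  rw [realize_commonFP] at haw
  obtain ⟨hainj, hapt, hainc⟩ := haw
  refine ⟨aw, hainj, hapt, fun i j => hainc i j, ?_⟩
  intro x hx hxc
  by_contra hne
  push_neg at hne
  let a'' : Fin m → M := fun i => if h : (i : ℕ) < m - 1 then aw ⟨i, h⟩ else x
  refine hM.2.1 ⟨a'', b, ?_, hb, ?_, hlb, ?_⟩
  · intro i i' h
    simp only [a''] at h
    split_ifs at h with h1 h2 h2
    · have := hainj h
      rw [Fin.mk.injEq] at this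
      exact Fin.ext this
    · exact absurd h.symm (hne _)
    · exact absurd h (hne _)
    · apply Fin.ext; omega
  · intro i
    simp only [a'']
    split_ifs
    · exact hapt _
    · exact hx
  · intro i j
    simp only [a'']
    split_ifs
    · exact hainc _ j
    · exact hxc j

end Main2

/-- If `M` is an existentially closed `K_{m,n}`-free incidence structure, then every
`m` pairwise distinct points of `M` are simultaneously incident to exactly `n-1` lines
of `M`, and every `n` pairwise distinct lines of `M` are simultaneously incident to
exactly `m-1` points of `M`. -/
theorem statement_1 (m n : ℕ) (hm : 1 ≤ m) (hn : 1 ≤ n)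
    (M : Type u) [IncLang.Structure M] (hM : IsECL m n M) :
    (∀ a : Fin m → M, Function.Injective a → (∀ i, ptL (a i)) →
      ∃ b : Fin (n - 1) → M, Function.Injective b ∧ (∀ j, lnL (b j)) ∧
        (∀ i j, incL (a i) (b j)) ∧
        ∀ y : M, lnL y → (∀ i, incL (a i) y) → ∃ j, y = b j) ∧
    (∀ b : Fin n → M, Function.Injective b → (∀ j, lnL (b j)) →
      ∃ a : Fin (m - 1) → M, Function.Injective a ∧ (∀ i, ptL (a i)) ∧
        (∀ i j, incL (a i) (b j)) ∧
        ∀ x : M, ptL x → (∀ j, incL x (b j)) → ∃ i, x = a i) := by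
  exact ⟨fun a ha hpa => main1 hm hn hM a ha hpa,
    fun b hb hlb => main2 hm hn hM b hb hlb⟩
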